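/- Let 𝒜 be a p×d complex matrix, b ∈ ℂ^p, let D, W, Ω₁ be p×p diagonal matrices with strictly positive diagonal entries, and let L be a p×p strictly lower-triangular complex matrix (so that D + sΩ₁L is invertible for every s ≥ 0). Then the operator 𝒜*D^{-1}WΩ₁𝒜 restricted to M := range(𝒜*) is a bijection of M, and the unique y_M ∈ M with 𝒜*D^{-1}WΩ₁𝒜 y_M = 𝒜*D^{-1}WΩ₁ b is the unique minimizer over M of the weighted least-squares functional x ↦ ⟨D^{-1}WΩ₁(b − 𝒜x), b − 𝒜x⟩. Moreover, if for each s ∈ (0,1] the vector y(s) ∈ M satisfies 𝒜*(D + sΩ₁L)^{-1}WΩ₁𝒜 y(s) = 𝒜*(D + sΩ₁L)^{-1}WΩ₁ b, then y(s) converges to y_M as s → 0⁺. -/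

import Mathlib

open scoped Matrix

section Aux

open Matrix

lemma aux_real_zero {p : ℕ} (γ : Fin p → ℝ) (hγ : ∀ i, 0 < γ i) (u : Fin p → ℂ)
    (h : (∑ i, γ i * Complex.normSq (u i)) = 0) : u = 0 := by
  have hz : ∀ i ∈ Finset.univ, γ i * Complex.normSq (u i) = 0 := by
    refine (Finset.sum_eq_zero_iff_of_nonneg ?_).1 h
    intro i _
    exact mul_nonneg (hγ i).le (Complex.normSq_nonneg _)
  funext i
  have h1 := hz i (Finset.mem_univ i)
  have h2 : Complex.normSq (u i) = 0 := by
    rcases mul_eq_zero.1 h1 with h | h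
    · exact absurd h (hγ i).ne'
    · exact h
  exact Complex.normSq_eq_zero.1 h2

lemma aux_pos {p : ℕ} (γ : Fin p → ℝ) (u : Fin p → ℂ) :
    star u ⬝ᵥ ((Matrix.diagonal (fun i => (γ i : ℂ))).mulVec u)
      = ((∑ i, γ i * Complex.normSq (u i) : ℝ) : ℂ) := by
  simp only [Matrix.mulVec_diagonal, dotProduct, Pi.star_apply]
  push_cast
  congr 1
  ext i
  rw [RCLike.star_def, Complex.normSq_eq_conj_mul_self]
  ring

lemma aux_pos_zero {p : ℕ} (γ : Fin p → ℝ) (hγ : ∀ i, 0 < γ i) (u : Fin p → ℂ)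
    (h : star u ⬝ᵥ ((Matrix.diagonal (fun i => (γ i : ℂ))).mulVec u) = 0) : u = 0 := by
  rw [aux_pos] at h
  exact aux_real_zero γ hγ u (by exact_mod_cast h)

lemma aux_adj {p d : ℕ} (𝒜 : Matrix (Fin p) (Fin d) ℂ) (x : Fin d → ℂ) (w : Fin p → ℂ) :
    star x ⬝ᵥ (𝒜ᴴ.mulVec w) = star (𝒜.mulVec x) ⬝ᵥ w := by
  rw [Matrix.dotProduct_mulVec, Matrix.star_mulVec]

lemma aux_ker {p d : ℕ} (𝒜 : Matrix (Fin p) (Fin d) ℂ) (x : Fin d → ℂ)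
    (hx : x ∈ LinearMap.range (Matrix.mulVecLin 𝒜ᴴ)) (h0 : 𝒜.mulVec x = 0) : x = 0 := by
  obtain ⟨t, ht⟩ := hx
  have h : star x ⬝ᵥ x = 0 := by
    have hx' : x = 𝒜ᴴ.mulVec t := ht.symm
    nth_rewrite 2 [hx']
    rw [aux_adj, h0]
    simp
  have h1 : star x ⬝ᵥ ((Matrix.diagonal (fun _ : Fin d => ((1:ℝ) : ℂ))).mulVec x) = 0 := by
    simpa using h
  exact aux_pos_zero (fun _ => (1:ℝ)) (fun _ => one_pos) x h1

lemma aux_det {p : ℕ} (d₀ : Fin p → ℝ) (C : Matrix (Fin p) (Fin p) ℂ)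
    (hC : ∀ i j, (i : Fin p) ≤ j → C i j = 0) (s : ℂ) :
    (Matrix.diagonal (fun i => (d₀ i : ℂ)) + s • C).det = ∏ i, (d₀ i : ℂ) := by
  rw [Matrix.det_of_lowerTriangular]
  · congr 1
    funext i
    simp [Matrix.diagonal_apply_eq, hC i i le_rfl]
  · intro i j hij
    have hij' : (i : Fin p) < j := hij
    simp [Matrix.diagonal_apply_ne _ (ne_of_lt hij'), hC i j hij'.le]

lemma aux_inner {p : ℕ} (γ : Fin p → ℝ) (r : Fin p → ℂ) :
    (inner ℂ ((WithLp.equiv 2 (Fin p → ℂ)).symm ((Matrix.diagonal fun i => (γ i : ℂ)).mulVec r))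
       ((WithLp.equiv 2 (Fin p → ℂ)).symm r) : ℂ)
      = ((∑ i, γ i * Complex.normSq (r i) : ℝ) : ℂ) := by
  rw [PiLp.inner_apply]
  simp only [WithLp.equiv_symm_apply, PiLp.toLp_apply, RCLike.inner_apply, Matrix.mulVec_diagonal]
  push_cast
  congr 1
  ext i
  rw [Complex.normSq_eq_conj_mul_self]
  simp only [_root_.map_mul, Complex.conj_ofReal, RCLike.star_def]
  ring

lemma aux_expand {p : ℕ} (γ : Fin p → ℝ) (q r : Fin p → ℂ)
    (h : star q ⬝ᵥ ((Matrix.diagonal fun i => (γ i : ℂ)).mulVec r) = 0) :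
    ∑ i, γ i * Complex.normSq (r i - q i)
      = (∑ i, γ i * Complex.normSq (r i)) + ∑ i, γ i * Complex.normSq (q i) := by
  have hre : ∑ i, γ i * ((r i) * (starRingEnd ℂ) (q i)).re = 0 := by
    have h' := congrArg Complex.re h
    simp only [dotProduct, Matrix.mulVec_diagonal, Pi.star_apply, Complex.re_sum,
      Complex.zero_re, RCLike.star_def] at h'
    rw [← h']
    refine Finset.sum_congr rfl fun i _ => ?_
    have : (starRingEnd ℂ) (q i) * ((γ i : ℂ) * r i) = (γ i : ℂ) * (r i * (starRingEnd ℂ) (q i)) := by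
      ring
    rw [this]
    simp [Complex.mul_re]
  have hpt : ∀ i, γ i * Complex.normSq (r i - q i)
      = γ i * Complex.normSq (r i) + γ i * Complex.normSq (q i)
        - 2 * (γ i * ((r i) * (starRingEnd ℂ) (q i)).re) := by
    intro i
    rw [Complex.normSq_sub]
    ring
  calc ∑ i, γ i * Complex.normSq (r i - q i)
      = ∑ i, (γ i * Complex.normSq (r i) + γ i * Complex.normSq (q i)
          - 2 * (γ i * ((r i) * (starRingEnd ℂ) (q i)).re)) :=
        Finset.sum_congr rfl fun i _ => hpt i
    _ = (∑ i, γ i * Complex.normSq (r i)) + (∑ i, γ i * Complex.normSq (q i))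
          - 2 * ∑ i, γ i * ((r i) * (starRingEnd ℂ) (q i)).re := by
        rw [Finset.sum_sub_distrib, Finset.sum_add_distrib, Finset.mul_sum]
    _ = _ := by rw [hre]; ring

end Aux


set_option maxHeartbeats 1000000
set_option synthInstance.maxHeartbeats 400000

/-- With `𝒜` a `p × d` complex matrix, `b ∈ ℂ^p`, `D, W, Ω₁` diagonal with
strictly positive diagonal entries and `L` strictly lower triangular (so `D + sΩ₁L` is
invertible for all `s ≥ 0`): the operator `𝒜* D⁻¹ W Ω₁ 𝒜` restricted to `M = range 𝒜*` is a
bijection of `M`; the unique `y_M ∈ M` solving `𝒜* D⁻¹ W Ω₁ 𝒜 y_M = 𝒜* D⁻¹ W Ω₁ b` is the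
unique minimizer over `M` of the weighted least-squares functional
`x ↦ ⟨D⁻¹ W Ω₁ (b − 𝒜x), b − 𝒜x⟩`; and any `y(s) ∈ M` solving
`𝒜* (D + sΩ₁L)⁻¹ W Ω₁ 𝒜 y(s) = 𝒜* (D + sΩ₁L)⁻¹ W Ω₁ b` for `s ∈ (0,1]` converges to `y_M` as
`s → 0⁺`. -/
theorem stmt_15 {p d : ℕ} (𝒜 : Matrix (Fin p) (Fin d) ℂ) (b : Fin p → ℂ)
    (d₀ w₀ o₀ : Fin p → ℝ) (hd : ∀ i, 0 < d₀ i) (hw : ∀ i, 0 < w₀ i) (ho : ∀ i, 0 < o₀ i)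
    (D W Ω₁ : Matrix (Fin p) (Fin p) ℂ)
    (hD : D = Matrix.diagonal fun i => (d₀ i : ℂ))
    (hW : W = Matrix.diagonal fun i => (w₀ i : ℂ))
    (hΩ : Ω₁ = Matrix.diagonal fun i => (o₀ i : ℂ))
    (L : Matrix (Fin p) (Fin p) ℂ) (hL : ∀ i j, i ≤ j → L i j = 0)
    (M : Submodule ℂ (Fin d → ℂ)) (hM : M = LinearMap.range (Matrix.mulVecLin 𝒜ᴴ))
    (F : (Fin d → ℂ) → ℝ)
    (hF : ∀ x, (F x : ℂ) =
      (inner ℂ ((WithLp.equiv 2 (Fin p → ℂ)).symm ((D⁻¹ * W * Ω₁).mulVec (b - 𝒜.mulVec x)))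
             ((WithLp.equiv 2 (Fin p → ℂ)).symm (b - 𝒜.mulVec x)) : ℂ)) :
    (∀ s : ℝ, 0 ≤ s → IsUnit (D + (s : ℂ) • (Ω₁ * L))) ∧
    Set.BijOn (fun x => (𝒜ᴴ * D⁻¹ * W * Ω₁ * 𝒜).mulVec x)
      (M : Set (Fin d → ℂ)) (M : Set (Fin d → ℂ)) ∧
    ∃ yM ∈ M,
      (𝒜ᴴ * D⁻¹ * W * Ω₁ * 𝒜).mulVec yM = (𝒜ᴴ * D⁻¹ * W * Ω₁).mulVec b ∧
      (∀ z ∈ M, (𝒜ᴴ * D⁻¹ * W * Ω₁ * 𝒜).mulVec z = (𝒜ᴴ * D⁻¹ * W * Ω₁).mulVec b → z = yM) ∧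
      (∀ x ∈ M, F yM ≤ F x) ∧
      (∀ x ∈ M, F x = F yM → x = yM) ∧
      ∀ y : ℝ → Fin d → ℂ,
        (∀ s ∈ Set.Ioc (0 : ℝ) 1, y s ∈ M ∧
          (𝒜ᴴ * (D + (s : ℂ) • (Ω₁ * L))⁻¹ * W * Ω₁ * 𝒜).mulVec (y s)
            = (𝒜ᴴ * (D + (s : ℂ) • (Ω₁ * L))⁻¹ * W * Ω₁).mulVec b) →
        Filter.Tendsto y (nhdsWithin 0 (Set.Ioc (0 : ℝ) 1)) (nhds yM) := by
  -- the strictly lower triangular matrix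
  have hCL : ∀ i j, (i : Fin p) ≤ j → (Ω₁ * L) i j = 0 := by
    intro i j hij
    rw [hΩ, Matrix.diagonal_mul, hL i j hij, mul_zero]
  -- determinant and invertibility of D + s Ω₁ L
  have hdet : ∀ s : ℂ, (D + s • (Ω₁ * L)).det = ∏ i, (d₀ i : ℂ) := by
    intro s; rw [hD]; exact aux_det d₀ _ hCL s
  have hdet_ne : (∏ i, (d₀ i : ℂ)) ≠ 0 :=
    Finset.prod_ne_zero_iff.2 fun i _ => Complex.ofReal_ne_zero.2 (hd i).ne'
  have hNunit : ∀ s : ℂ, IsUnit (D + s • (Ω₁ * L)) := fun s =>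
    (Matrix.isUnit_iff_isUnit_det _).2 (by rw [hdet]; exact hdet_ne.isUnit)
  -- the positive coefficients
  set γ : Fin p → ℝ := fun i => (d₀ i)⁻¹ * (w₀ i * o₀ i) with hγdef
  have hγ : ∀ i, 0 < γ i := fun i =>
    mul_pos (inv_pos.2 (hd i)) (mul_pos (hw i) (ho i))
  set Bm : Matrix (Fin p) (Fin p) ℂ := Matrix.diagonal (fun i => (γ i : ℂ)) with hBmdef
  have hDinv : D⁻¹ = Matrix.diagonal (fun i => ((d₀ i : ℂ))⁻¹) := by
    rw [hD]
    refine Matrix.inv_eq_right_inv ?_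
    rw [Matrix.diagonal_mul_diagonal]
    have : (fun i => (d₀ i : ℂ) * ((d₀ i : ℂ))⁻¹) = fun _ => (1 : ℂ) := by
      funext i
      exact mul_inv_cancel₀ (Complex.ofReal_ne_zero.2 (hd i).ne')
    rw [this, Matrix.diagonal_one]
  have hB : D⁻¹ * W * Ω₁ = Bm := by
    rw [hDinv, hW, hΩ, Matrix.diagonal_mul_diagonal, Matrix.diagonal_mul_diagonal, hBmdef]
    have : (fun i => ((d₀ i : ℂ))⁻¹ * (w₀ i : ℂ) * (o₀ i : ℂ)) = fun i => ((γ i : ℝ) : ℂ) := by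
      funext i
      rw [hγdef]
      push_cast
      ring
    rw [this]
  have hB5 : 𝒜ᴴ * D⁻¹ * W * Ω₁ = 𝒜ᴴ * Bm := by
    rw [Matrix.mul_assoc 𝒜ᴴ D⁻¹ W, Matrix.mul_assoc 𝒜ᴴ (D⁻¹ * W) Ω₁, hB]
  have hGmat : 𝒜ᴴ * D⁻¹ * W * Ω₁ * 𝒜 = 𝒜ᴴ * Bm * 𝒜 := by rw [hB5]
  -- membership
  have hmem : ∀ {k : ℕ} (X : Matrix (Fin p) (Fin k) ℂ) (v : Fin k → ℂ), (𝒜ᴴ * X).mulVec v ∈ M := by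
    intro k X v
    rw [hM]
    exact ⟨X.mulVec v, by rw [Matrix.mulVecLin_apply, Matrix.mulVec_mulVec]⟩
  -- injectivity on M
  have hinj : ∀ x ∈ M, (𝒜ᴴ * Bm * 𝒜).mulVec x = 0 → x = 0 := by
    intro x hx h0
    have h1 : 𝒜.mulVec x = 0 := by
      apply aux_pos_zero γ hγ (𝒜.mulVec x)
      calc star (𝒜.mulVec x) ⬝ᵥ Bm.mulVec (𝒜.mulVec x)
          = star x ⬝ᵥ 𝒜ᴴ.mulVec (Bm.mulVec (𝒜.mulVec x)) := (aux_adj 𝒜 x _).symm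
        _ = star x ⬝ᵥ (𝒜ᴴ * Bm * 𝒜).mulVec x := by
            rw [Matrix.mulVec_mulVec, Matrix.mulVec_mulVec]
        _ = 0 := by rw [h0]; simp
    exact aux_ker 𝒜 x (hM ▸ hx) h1
  -- projection onto M
  obtain ⟨Q, hQ⟩ := Submodule.exists_isCompl M
  set φ : (Fin d → ℂ) →ₗ[ℂ] M := M.projectionOnto Q hQ with hφdef
  have hφcoe : ∀ (v : Fin d → ℂ) (hv : v ∈ M), ((φ v : M) : Fin d → ℂ) = v := by
    intro v hv
    have := Submodule.linearProjOfIsCompl_apply_left hQ ⟨v, hv⟩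
    rw [hφdef]
    rw [this]
  -- the fixed tail matrix
  set E : Matrix (Fin p) (Fin d) ℂ := W * Ω₁ * 𝒜 with hEdef
  -- the bundled linear dependence on the middle matrix
  set Φ : Matrix (Fin p) (Fin p) ℂ →ₗ[ℂ] (M →L[ℂ] M) :=
    { toFun := fun X => LinearMap.toContinuousLinearMap (φ ∘ₗ (𝒜ᴴ * X * E).mulVecLin ∘ₗ M.subtype)
      map_add' := by
        intro X Y
        apply ContinuousLinearMap.ext
        intro v
        simp [Matrix.add_mul, Matrix.mul_add, Matrix.add_mulVec, Matrix.mul_assoc]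
      map_smul' := by
        intro a X
        apply ContinuousLinearMap.ext
        intro v
        simp [Matrix.mul_smul, Matrix.smul_mul, Matrix.smul_mulVec, Matrix.mul_assoc] } with hΦdef
  -- the family of matrices and operators
  set N : ℝ → Matrix (Fin p) (Fin p) ℂ := fun s => D + (s : ℂ) • (Ω₁ * L) with hNdef
  set T : ℝ → (M →L[ℂ] M) := fun s => Φ ((N s)⁻¹) with hTdef
  set rhsv : ℝ → M := fun s => φ ((𝒜ᴴ * ((N s)⁻¹ * (W * Ω₁))).mulVec b) with hrhsdef
  have hTapply : ∀ (s : ℝ) (z : Fin d → ℂ) (hz : z ∈ M),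
      ((T s ⟨z, hz⟩ : M) : Fin d → ℂ) = (𝒜ᴴ * (N s)⁻¹ * W * Ω₁ * 𝒜).mulVec z := by
    intro s z hz
    show ((φ ((𝒜ᴴ * (N s)⁻¹ * E).mulVec z) : M) : Fin d → ℂ) = _
    have hassoc : 𝒜ᴴ * (N s)⁻¹ * E = 𝒜ᴴ * (N s)⁻¹ * W * Ω₁ * 𝒜 := by
      rw [hEdef]
      simp only [Matrix.mul_assoc]
    rw [hassoc]
    have hmm : (𝒜ᴴ * (N s)⁻¹ * W * Ω₁ * 𝒜).mulVec z ∈ M := by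
      have : 𝒜ᴴ * (N s)⁻¹ * W * Ω₁ * 𝒜 = 𝒜ᴴ * ((N s)⁻¹ * W * Ω₁ * 𝒜) := by
        simp only [Matrix.mul_assoc]
      rw [this]
      exact hmem _ z
    exact hφcoe _ hmm
  have hrhscoe : ∀ s : ℝ, ((rhsv s : M) : Fin d → ℂ) = (𝒜ᴴ * (N s)⁻¹ * W * Ω₁).mulVec b := by
    intro s
    show ((φ ((𝒜ᴴ * ((N s)⁻¹ * (W * Ω₁))).mulVec b) : M) : Fin d → ℂ) = _
    have hassoc : 𝒜ᴴ * ((N s)⁻¹ * (W * Ω₁)) = 𝒜ᴴ * (N s)⁻¹ * W * Ω₁ := by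
      simp only [Matrix.mul_assoc]
    rw [hassoc]
    refine hφcoe _ ?_
    rw [← hassoc]
    exact hmem _ b
  have hN0 : N 0 = D := by simp [hNdef]
  -- continuity
  have hNcont : Continuous N := by
    rw [hNdef]
    exact continuous_const.add (Complex.continuous_ofReal.smul continuous_const)
  have hNinvcont : Continuous fun s : ℝ => (N s)⁻¹ := by
    rw [continuous_iff_continuousAt]
    intro s
    have hdetc : ContinuousAt Ring.inverse (N s).det := by
      have h1 : (N s).det = ∏ i, (d₀ i : ℂ) := hdet ((s : ℝ) : ℂ)
      rw [h1]
      exact NormedRing.inverse_continuousAt hdet_ne.isUnit.unit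
    exact (continuousAt_matrix_inv (N s) hdetc).comp hNcont.continuousAt
  have hTcont : Continuous T := by
    rw [hTdef]
    have hΦc : Continuous Φ := LinearMap.continuous_of_finiteDimensional (𝕜 := ℂ) (F' := M →L[ℂ] M) (E := Matrix (Fin p) (Fin p) ℂ) Φ
    exact hΦc.comp hNinvcont
  have hrhscont : Continuous rhsv := by
    rw [hrhsdef]
    have h1 : Continuous fun s : ℝ => (N s)⁻¹ * (W * Ω₁) := hNinvcont.matrix_mul continuous_const
    have h2 : Continuous fun s : ℝ => 𝒜ᴴ * ((N s)⁻¹ * (W * Ω₁)) := continuous_const.matrix_mul h1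
    have h3 : Continuous fun s : ℝ => (𝒜ᴴ * ((N s)⁻¹ * (W * Ω₁))).mulVec b :=
      h2.matrix_mulVec continuous_const
    exact (LinearMap.continuous_of_finiteDimensional φ).comp h3
  -- T 0 agrees with the limit operator
  have hT0 : ∀ (z : Fin d → ℂ) (hz : z ∈ M),
      ((T 0 ⟨z, hz⟩ : M) : Fin d → ℂ) = (𝒜ᴴ * Bm * 𝒜).mulVec z := by
    intro z hz
    rw [hTapply 0 z hz, hN0, ← hGmat]
  -- T 0 is bijective
  have hker : ∀ v : M, T 0 v = 0 → v = 0 := by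
    intro v hv
    have h1 : (𝒜ᴴ * Bm * 𝒜).mulVec (v : Fin d → ℂ) = 0 := by
      rw [← hT0 (v : Fin d → ℂ) v.2]
      have : (⟨(v : Fin d → ℂ), v.2⟩ : M) = v := Subtype.coe_eta v v.2
      rw [this, hv]
      rfl
    exact Subtype.ext (hinj _ v.2 h1)
  have hinj0 : Function.Injective (T 0) := by
    intro a c hac
    have : T 0 (a - c) = 0 := by rw [map_sub, hac, sub_self]
    have := hker _ this
    exact sub_eq_zero.1 this
  have hsurj0 : Function.Surjective (T 0) := by
    have : Function.Injective ((T 0 : M →L[ℂ] M) : M →ₗ[ℂ] M) := hinj0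
    exact LinearMap.injective_iff_surjective.1 this
  -- T 0 is a unit
  set e : M ≃ₗ[ℂ] M := LinearEquiv.ofBijective ((T 0 : M →L[ℂ] M) : M →ₗ[ℂ] M) ⟨hinj0, hsurj0⟩
    with hedef
  have hunit0 : IsUnit (T 0) := by
    refine ⟨⟨T 0, LinearMap.toContinuousLinearMap e.symm.toLinearMap, ?_, ?_⟩, rfl⟩
    · apply ContinuousLinearMap.ext
      intro v
      show T 0 (e.symm v) = v
      exact e.apply_symm_apply v
    · apply ContinuousLinearMap.ext
      intro v
      show e.symm (T 0 v) = v
      exact e.symm_apply_apply v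
  -- the limit point
  set yM' : M := Ring.inverse (T 0) (rhsv 0) with hyM'def
  have hT0yM : T 0 yM' = rhsv 0 := by
    obtain ⟨u, hu⟩ := hunit0
    rw [hyM'def, ← hu, Ring.inverse_unit]
    show (u : M →L[ℂ] M) ((↑u⁻¹ : M →L[ℂ] M) (rhsv 0)) = rhsv 0
    rw [← ContinuousLinearMap.mul_apply, u.mul_inv, ContinuousLinearMap.one_apply]
  have hyM'mem : (yM' : Fin d → ℂ) ∈ M := yM'.2
  -- main equation for yM
  have hyMeq : (𝒜ᴴ * Bm * 𝒜).mulVec (yM' : Fin d → ℂ) = (𝒜ᴴ * Bm).mulVec b := by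
    have h1 := congrArg (Subtype.val) hT0yM
    have h2 : ((T 0 ⟨(yM' : Fin d → ℂ), yM'.2⟩ : M) : Fin d → ℂ)
        = (𝒜ᴴ * Bm * 𝒜).mulVec (yM' : Fin d → ℂ) := hT0 _ yM'.2
    rw [Subtype.coe_eta] at h2
    rw [h2] at h1
    rw [h1, hrhscoe 0, hN0, hB5]
  -- the value of F
  have hFf : ∀ x, F x = ∑ i, γ i * Complex.normSq ((b - 𝒜.mulVec x) i) := by
    intro x
    have h := hF x
    rw [hB, hBmdef, aux_inner γ] at h
    exact_mod_cast h
  have hfpos : ∀ r : Fin p → ℂ, 0 ≤ ∑ i, γ i * Complex.normSq (r i) := by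
    intro r
    exact Finset.sum_nonneg fun i _ => mul_nonneg (hγ i).le (Complex.normSq_nonneg _)
  -- orthogonality of the residual
  have hr0 : (𝒜ᴴ * Bm).mulVec (b - 𝒜.mulVec (yM' : Fin d → ℂ)) = 0 := by
    rw [Matrix.mulVec_sub]
    rw [Matrix.mulVec_mulVec]
    rw [hyMeq]
    exact sub_self _
  have hcross : ∀ h : Fin d → ℂ,
      star (𝒜.mulVec h) ⬝ᵥ Bm.mulVec (b - 𝒜.mulVec (yM' : Fin d → ℂ)) = 0 := by
    intro h
    calc star (𝒜.mulVec h) ⬝ᵥ Bm.mulVec (b - 𝒜.mulVec (yM' : Fin d → ℂ))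
        = star h ⬝ᵥ 𝒜ᴴ.mulVec (Bm.mulVec (b - 𝒜.mulVec (yM' : Fin d → ℂ))) :=
          (aux_adj 𝒜 h _).symm
      _ = star h ⬝ᵥ (𝒜ᴴ * Bm).mulVec (b - 𝒜.mulVec (yM' : Fin d → ℂ)) := by
          rw [Matrix.mulVec_mulVec]
      _ = 0 := by rw [hr0]; simp
  -- expansion of F around yM'
  have hexp : ∀ x, F x = F (yM' : Fin d → ℂ)
      + ∑ i, γ i * Complex.normSq ((𝒜.mulVec (x - (yM' : Fin d → ℂ))) i) := by
    intro x
    have hdecomp : b - 𝒜.mulVec x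
        = (b - 𝒜.mulVec (yM' : Fin d → ℂ)) - 𝒜.mulVec (x - (yM' : Fin d → ℂ)) := by
      rw [Matrix.mulVec_sub]
      abel
    rw [hFf x, hFf (yM' : Fin d → ℂ), hdecomp]
    have := aux_expand γ (𝒜.mulVec (x - (yM' : Fin d → ℂ)))
      (b - 𝒜.mulVec (yM' : Fin d → ℂ)) (by rw [← hBmdef]; exact hcross _)
    simp only [Pi.sub_apply] at this ⊢
    rw [this]
  -- the full-space matrix maps M to M
  have hGfull : 𝒜ᴴ * D⁻¹ * W * Ω₁ * 𝒜 = 𝒜ᴴ * (D⁻¹ * W * Ω₁ * 𝒜) := by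
    simp only [Matrix.mul_assoc]
  refine ⟨fun s _ => hNunit s, ⟨?_, ?_, ?_⟩, (yM' : Fin d → ℂ), hyM'mem, ?_, ?_, ?_, ?_, ?_⟩
  · -- MapsTo
    intro x _
    show (𝒜ᴴ * D⁻¹ * W * Ω₁ * 𝒜).mulVec x ∈ M
    rw [hGfull]
    exact hmem _ x
  · -- InjOn
    intro x hx z hz hxz
    simp only at hxz
    have h1 : (𝒜ᴴ * Bm * 𝒜).mulVec (x - z) = 0 := by
      rw [Matrix.mulVec_sub, ← hGmat, hxz, sub_self]
    exact sub_eq_zero.1 (hinj _ (M.sub_mem hx hz) h1)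
  · -- SurjOn
    intro v hv
    obtain ⟨x', hx'⟩ := hsurj0 ⟨v, hv⟩
    refine ⟨(x' : Fin d → ℂ), x'.2, ?_⟩
    show (𝒜ᴴ * D⁻¹ * W * Ω₁ * 𝒜).mulVec (x' : Fin d → ℂ) = v
    rw [hGmat, ← hT0 (x' : Fin d → ℂ) x'.2]
    rw [Subtype.coe_eta, hx']
  · -- equation
    rw [hGmat, hB5]
    exact hyMeq
  · -- uniqueness of solution
    intro z hz heq
    rw [hGmat, hB5] at heq
    have h1 : (𝒜ᴴ * Bm * 𝒜).mulVec (z - (yM' : Fin d → ℂ)) = 0 := by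
      rw [Matrix.mulVec_sub, heq, hyMeq, sub_self]
    exact sub_eq_zero.1 (hinj _ (M.sub_mem hz hyM'mem) h1)
  · -- minimality
    intro x _
    rw [hexp x]
    exact le_add_of_nonneg_right (hfpos _)
  · -- uniqueness of minimizer
    intro x hx hFx
    have h0 : ∑ i, γ i * Complex.normSq ((𝒜.mulVec (x - (yM' : Fin d → ℂ))) i) = 0 := by
      have h1 := hexp x
      rw [hFx] at h1
      linarith
    have h2 : 𝒜.mulVec (x - (yM' : Fin d → ℂ)) = 0 := aux_real_zero γ hγ _ h0
    have h3 : x - (yM' : Fin d → ℂ) = 0 :=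
      aux_ker 𝒜 _ (hM ▸ M.sub_mem hx hyM'mem) h2
    exact sub_eq_zero.1 h3
  · -- convergence
    intro y hy
    have hopen : IsOpen {x : M →L[ℂ] M | IsUnit x} := Units.isOpen (R := M →L[ℂ] M)
    have hev0 : ∀ᶠ s in nhds (0:ℝ), IsUnit (T s) :=
      (hTcont.tendsto 0).eventually (hopen.eventually_mem hunit0)
    have hev1 : ∀ᶠ s in nhdsWithin 0 (Set.Ioc (0:ℝ) 1), IsUnit (T s) :=
      hev0.filter_mono nhdsWithin_le_nhds
    have hev2 : ∀ᶠ s in nhdsWithin 0 (Set.Ioc (0:ℝ) 1),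
        y s = ((Ring.inverse (T s) (rhsv s) : M) : Fin d → ℂ) := by
      filter_upwards [hev1, self_mem_nhdsWithin] with s hu hs
      obtain ⟨hymem, heq⟩ := hy s hs
      have h1 : T s ⟨y s, hymem⟩ = rhsv s := by
        apply Subtype.ext
        rw [hTapply s (y s) hymem, hrhscoe s]
        exact heq
      obtain ⟨u, hu'⟩ := hu
      rw [← hu', Ring.inverse_unit]
      have h2 : (⟨y s, hymem⟩ : M) = (↑u⁻¹ : M →L[ℂ] M) (rhsv s) := by
        rw [← h1, ← hu']
        show _ = (↑u⁻¹ : M →L[ℂ] M) ((u : M →L[ℂ] M) _)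
        rw [← ContinuousLinearMap.mul_apply, u.inv_mul, ContinuousLinearMap.one_apply]
      calc y s = ((⟨y s, hymem⟩ : M) : Fin d → ℂ) := rfl
        _ = _ := by rw [h2]
    have hTinv : Filter.Tendsto (fun s => Ring.inverse (T s)) (nhds (0:ℝ))
        (nhds (Ring.inverse (T 0))) := by
      have h4 : ContinuousAt Ring.inverse (T 0) := by
        have h5 := NormedRing.inverse_continuousAt (R := M →L[ℂ] M) hunit0.unit
        rwa [IsUnit.unit_spec] at h5
      exact h4.tendsto.comp (hTcont.tendsto 0)
    have happ : Filter.Tendsto (fun s => Ring.inverse (T s) (rhsv s)) (nhds (0:ℝ))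
        (nhds yM') := by
      have h5 : Filter.Tendsto (fun s => (Ring.inverse (T s), rhsv s)) (nhds (0:ℝ))
          (nhds (Ring.inverse (T 0), rhsv 0)) := hTinv.prodMk_nhds (hrhscont.tendsto 0)
      have h6 := (isBoundedBilinearMap_apply.continuous.tendsto
        (Ring.inverse (T 0), rhsv 0)).comp h5
      rw [hyM'def]
      exact h6
    have hlim : Filter.Tendsto (fun s => ((Ring.inverse (T s) (rhsv s) : M) : Fin d → ℂ))
        (nhdsWithin 0 (Set.Ioc (0:ℝ) 1)) (nhds ((yM' : Fin d → ℂ))) := by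
      have h7 := (continuous_subtype_val.tendsto yM').comp happ
      exact h7.mono_left nhdsWithin_le_nhds
    have hev2' : y =ᶠ[nhdsWithin 0 (Set.Ioc (0:ℝ) 1)]
        fun s => ((Ring.inverse (T s) (rhsv s) : M) : Fin d → ℂ) := hev2
    exact Filter.Tendsto.congr' hev2'.symm hlim
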